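/- arXiv:2505.02336 — 2 statements merged into one kernel-verified Lean document; each statement's English description precedes it below -/
import Mathlib

section
/- Let f(x) = x^m − (b−1)(x^{m−1} + x^{m−2} + ⋯ + x + 1) and g(x) = x^m − b x^{m−1} + 1, and let λ and η be the largest real roots of f and g respectively. Then b−1 < η < λ < b, every complex root z of f with z ≠ λ satisfies |z| < 1, and every complex root z of g with z ≠ η satisfies |z| < 1 (so λ and η are Pisot numbers). -/
open MeasureTheory Filter
open Finset

namespace Paper



private lemma key_identity {R : Type*} [CommRing R] (x B : R) (m : ℕ) :
    (x - 1) * (x ^ m - (B - 1) * ∑ i ∈ range m, x ^ i)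
      = x ^ m * (x - B) + (B - 1) := by
  have h := geom_sum_mul x m
  linear_combination (1 - B) * h

private lemma im_pow_le (w : ℂ) (n : ℕ) (hn : 1 ≤ n) :
    |(w ^ n).im| ≤ n * |w.im| * ‖w‖ ^ (n - 1) := by
  induction n, hn using Nat.le_induction with
  | base => simp
  | succ n hn ih =>
    have h1 : (w ^ (n + 1)).im = (w ^ n).re * w.im + (w ^ n).im * w.re := by
      rw [pow_succ, Complex.mul_im]
    have h2 : |(w ^ n).re| ≤ ‖w‖ ^ n := by
      simpa [norm_pow] using Complex.abs_re_le_norm (w ^ n)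
    have h3 : |w.re| ≤ ‖w‖ := Complex.abs_re_le_norm w
    have h4 : ‖w‖ ^ (n - 1) * ‖w‖ = ‖w‖ ^ n := by
      rw [← pow_succ, Nat.sub_add_cancel hn]
    have hb1 : |(w ^ n).re| * |w.im| ≤ ‖w‖ ^ n * |w.im| :=
      mul_le_mul_of_nonneg_right h2 (abs_nonneg _)
    have hb2 : |(w ^ n).im| * |w.re| ≤ (n * |w.im| * ‖w‖ ^ (n - 1)) * ‖w‖ := by
      apply mul_le_mul ih h3 (abs_nonneg _)
      positivity
    calc |(w ^ (n + 1)).im| ≤ |(w ^ n).re * w.im| + |(w ^ n).im * w.re| := by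
          rw [h1]; exact abs_add_le _ _
      _ = |(w ^ n).re| * |w.im| + |(w ^ n).im| * |w.re| := by rw [abs_mul, abs_mul]
      _ ≤ ‖w‖ ^ n * |w.im| + (n * |w.im| * ‖w‖ ^ (n - 1)) * ‖w‖ := by
          linarith
      _ = (↑(n + 1) : ℝ) * |w.im| * ‖w‖ ^ (n + 1 - 1) := by
          simp only [Nat.add_sub_cancel]
          push_cast
          rw [mul_assoc (↑n * |w.im|), h4]
          ring

private lemma f_aux (B : ℝ) (m : ℕ) (hm : 1 ≤ m)
    {s t : ℝ} (hs : 0 < s) (hst : s < t)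
    (hseq : s ^ m = (B - 1) * ∑ i ∈ range m, s ^ i)
    (hteq : t ^ m = (B - 1) * ∑ i ∈ range m, t ^ i) : False := by
  have ht : 0 < t := hs.trans hst
  have hpos : 0 < ∑ i ∈ range m, (t ^ m * s ^ i - s ^ m * t ^ i) := by
    apply Finset.sum_pos
    · intro i hi
      have him : i < m := Finset.mem_range.mp hi
      have hiadd : i + (m - i) = m := Nat.add_sub_cancel' him.le
      have hlt : s ^ (m - i) < t ^ (m - i) :=
        pow_lt_pow_left₀ hst hs.le (by omega)
      have e1 : t ^ m = t ^ i * t ^ (m - i) := by rw [← pow_add, hiadd]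
      have e2 : s ^ m = s ^ i * s ^ (m - i) := by rw [← pow_add, hiadd]
      have h1 : t ^ m * s ^ i - s ^ m * t ^ i
          = s ^ i * t ^ i * (t ^ (m - i) - s ^ (m - i)) := by
        rw [e1, e2]; ring
      rw [h1]
      exact mul_pos (by positivity) (sub_pos.mpr hlt)
    · exact Finset.nonempty_range_iff.mpr (by omega)
  have hzero : ∑ i ∈ range m, (t ^ m * s ^ i - s ^ m * t ^ i) = 0 := by
    rw [Finset.sum_sub_distrib, ← Finset.mul_sum, ← Finset.mul_sum, hteq, hseq]
    ring
  linarith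

private lemma f_pos_root_unique (B : ℝ) (m : ℕ) (hm : 1 ≤ m)
    {s t : ℝ} (hs : 0 < s) (ht : 0 < t)
    (hseq : s ^ m = (B - 1) * ∑ i ∈ range m, s ^ i)
    (hteq : t ^ m = (B - 1) * ∑ i ∈ range m, t ^ i) : s = t := by
  rcases lt_trichotomy s t with h | h | h
  · exact absurd (f_aux B m hm hs h hseq hteq) (by simp)
  · exact h
  · exact absurd (f_aux B m hm ht h hteq hseq) (by simp)

private lemma g_aux (B : ℝ) (m : ℕ) (hm : 2 ≤ m)
    {s t : ℝ} (hs : 2 ≤ s) (hst : s < t)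
    (hseq : s ^ m + 1 = B * s ^ (m - 1))
    (hteq : t ^ m + 1 = B * t ^ (m - 1)) : False := by
  have ht : 2 ≤ t := hs.trans hst.le
  have hs0 : (0:ℝ) < s := by linarith
  have ht0 : (0:ℝ) < t := by linarith
  have hm1 : m - 1 + 1 = m := by omega
  have hsm : s ^ m = s ^ (m - 1) * s := by rw [← pow_succ, hm1]
  have htm : t ^ m = t ^ (m - 1) * t := by rw [← pow_succ, hm1]
  have h1 : (s ^ m + 1) * t ^ (m - 1) = (t ^ m + 1) * s ^ (m - 1) := by
    rw [hseq, hteq]; ring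
  have h1' : (s ^ (m - 1) * s + 1) * t ^ (m - 1) = (t ^ (m - 1) * t + 1) * s ^ (m - 1) := by
    rw [← hsm, ← htm]; exact h1
  have hcross : t ^ (m - 1) - s ^ (m - 1) = s ^ (m - 1) * t ^ (m - 1) * (t - s) := by
    linear_combination h1'
  have hg := geom_sum₂_mul t s (m - 1)
  have hsum : ∑ i ∈ range (m - 1), t ^ i * s ^ (m - 1 - 1 - i)
      ≤ ((m - 1 : ℕ) : ℝ) * t ^ (m - 2) := by
    have := Finset.sum_le_card_nsmul (range (m - 1)) (fun i => t ^ i * s ^ (m - 1 - 1 - i))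
      (t ^ (m - 2)) ?_
    · simpa [nsmul_eq_mul] using this
    · intro i hi
      have him : i < m - 1 := Finset.mem_range.mp hi
      have e : i + (m - 1 - 1 - i) = m - 2 := by omega
      have hterm : t ^ i * s ^ (m - 1 - 1 - i) ≤ t ^ i * t ^ (m - 1 - 1 - i) := by
        apply mul_le_mul_of_nonneg_left (pow_le_pow_left₀ (by linarith) hst.le _) (by positivity)
      calc t ^ i * s ^ (m - 1 - 1 - i) ≤ t ^ i * t ^ (m - 1 - 1 - i) := hterm
        _ = t ^ (m - 2) := by rw [← pow_add, e]
  -- from hg and hcross : (sum) * (t - s) = s^(m-1) t^(m-1) (t-s)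
  have hts : 0 < t - s := by linarith
  have hkey : s ^ (m - 1) * t ^ (m - 1) ≤ ((m - 1 : ℕ) : ℝ) * t ^ (m - 2) := by
    apply le_of_mul_le_mul_right _ hts
    calc s ^ (m - 1) * t ^ (m - 1) * (t - s)
        = (∑ i ∈ range (m - 1), t ^ i * s ^ (m - 1 - 1 - i)) * (t - s) := by rw [hg, hcross]
      _ ≤ ((m - 1 : ℕ) : ℝ) * t ^ (m - 2) * (t - s) := mul_le_mul_of_nonneg_right hsum hts.le
  -- contradiction: s^(m-1) t^(m-1) = s^(m-1) * t * t^(m-2) ≥ 2^m * t^(m-2) > (m-1) t^(m-2)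
  have htm1 : t ^ (m - 1) = t * t ^ (m - 2) := by
    rw [← pow_succ']
    congr 1
    omega
  have hs2 : (2:ℝ) ^ (m - 1) ≤ s ^ (m - 1) := pow_le_pow_left₀ (by norm_num) hs _
  have htpos : (0:ℝ) < t ^ (m - 2) := by positivity
  have hcast : ((m - 1 : ℕ) : ℝ) < 2 ^ (m - 1) * 2 := by
    have h2 : ((m : ℕ) : ℝ) < 2 ^ m := by exact_mod_cast (Nat.lt_two_pow_self (n := m))
    have h3 : (2:ℝ) ^ m = 2 ^ (m - 1) * 2 := by
      rw [← pow_succ, hm1]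
    have h4 : ((m - 1 : ℕ) : ℝ) ≤ (m : ℝ) := by
      have : (m - 1 : ℕ) ≤ m := by omega
      exact_mod_cast this
    linarith
  have hfin : ((m - 1 : ℕ) : ℝ) * t ^ (m - 2) < s ^ (m - 1) * t ^ (m - 1) := by
    calc ((m - 1 : ℕ) : ℝ) * t ^ (m - 2) < (2 ^ (m - 1) * 2) * t ^ (m - 2) :=
          mul_lt_mul_of_pos_right hcast htpos
      _ ≤ (s ^ (m - 1) * t) * t ^ (m - 2) := by
          apply mul_le_mul_of_nonneg_right _ htpos.le
          exact mul_le_mul hs2 (by linarith) (by norm_num) (by positivity)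
      _ = s ^ (m - 1) * t ^ (m - 1) := by rw [htm1]; ring
  linarith



set_option maxHeartbeats 2000000 in
/-- **Lemma 3.3.** Let `λ` and `η` be the largest real roots of
`f(x) = x^m - (b-1)(x^{m-1} + ⋯ + x + 1)` and `g(x) = x^m - b x^{m-1} + 1`,
respectively. Then `b - 1 < η < λ < b`, and both `λ` and `η` are Pisot numbers:
all their other complex conjugate roots lie strictly inside the unit circle. -/
theorem pisot_roots (b m : ℕ) (hb : 3 ≤ b) (hm : 2 ≤ m) (lam eta : ℝ)
    (hlam : lam ^ m = ((b : ℝ) - 1) * ∑ i ∈ Finset.range m, lam ^ i)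
    (hlammax : ∀ x : ℝ, x ^ m = ((b : ℝ) - 1) * ∑ i ∈ Finset.range m, x ^ i → x ≤ lam)
    (heta : eta ^ m = (b : ℝ) * eta ^ (m - 1) - 1)
    (hetamax : ∀ x : ℝ, x ^ m = (b : ℝ) * x ^ (m - 1) - 1 → x ≤ eta) :
    ((b : ℝ) - 1 < eta ∧ eta < lam ∧ lam < (b : ℝ)) ∧
    (∀ z : ℂ, z ^ m = ((b : ℂ) - 1) * ∑ i ∈ Finset.range m, z ^ i →
      z ≠ (lam : ℂ) → ‖z‖ < 1) ∧
    (∀ z : ℂ, z ^ m = (b : ℂ) * z ^ (m - 1) - 1 →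
      z ≠ (eta : ℂ) → ‖z‖ < 1) := by
  have hB : (3 : ℝ) ≤ (b : ℝ) := by exact_mod_cast hb
  have hm1 : m - 1 + 1 = m := by omega
  have hm0 : 1 ≤ m := by omega
  set B : ℝ := (b : ℝ) with hBdef
  set F : ℝ → ℝ := fun x => x ^ m - (B - 1) * ∑ i ∈ Finset.range m, x ^ i with hFdef
  have hFc : Continuous F := by
    apply Continuous.sub (continuous_pow m)
    exact continuous_const.mul (continuous_finset_sum _ fun i _ => continuous_pow i)
  have kf : ∀ x : ℝ, (x - 1) * F x = x ^ m * (x - B) + (B - 1) := fun x =>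
    key_identity x B m
  -- root finder
  have root_between : ∀ u v : ℝ, u ≤ v → F u < 0 → 0 < F v →
      ∃ c, c ∈ Set.Ioo u v ∧ F c = 0 := by
    intro u v huv hu hv
    have h := intermediate_value_Ioo huv hFc.continuousOn
    obtain ⟨c, hc, hc0⟩ := h (Set.mem_Ioo.mpr ⟨hu, hv⟩)
    exact ⟨c, hc, hc0⟩
  have hpow2m : (B - 1) ^ 2 ≤ (B - 1) ^ m := pow_le_pow_right₀ (by linarith) hm
  have hFb1 : F (B - 1) < 0 := by
    have e := kf (B - 1)
    nlinarith [e]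
  have hFb : 0 < F B := by
    have e := kf B
    nlinarith [e]
  -- lam > B - 1
  have hlam_gt : B - 1 < lam := by
    obtain ⟨c, hc, hc0⟩ := root_between (B - 1) B (by linarith) hFb1 hFb
    have : c ≤ lam := hlammax c (by
      have : c ^ m - (B - 1) * ∑ i ∈ Finset.range m, c ^ i = 0 := hc0
      linarith)
    exact lt_of_lt_of_le hc.1 this
  have hFlam : F lam = 0 := sub_eq_zero_of_eq hlam
  have hlam_eq : lam ^ m * (B - lam) = B - 1 := by
    have e := kf lam
    rw [hFlam, mul_zero] at e
    linear_combination e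
  have hlampos : (0:ℝ) < lam := by linarith
  have hlam_lt_b : lam < B := by
    by_contra hcon
    push_neg at hcon
    nlinarith [pow_pos hlampos m, hlam_eq]
  -- eta side
  have hetam : ∀ x : ℝ, x ^ m = x ^ (m - 1) * x := fun x => by rw [← pow_succ, hm1]
  set G : ℝ → ℝ := fun x => x ^ m - B * x ^ (m - 1) + 1 with hGdef
  have hGc : Continuous G := by
    apply Continuous.add _ continuous_const
    exact (continuous_pow m).sub (continuous_const.mul (continuous_pow (m - 1)))
  have kg : ∀ x : ℝ, G x = x ^ (m - 1) * (x - B) + 1 := by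
    intro x
    show x ^ m - B * x ^ (m - 1) + 1 = _
    rw [hetam x]; ring
  have hpowm1 : (2:ℝ) ≤ (B - 1) ^ (m - 1) := by
    calc (2:ℝ) = 2 ^ 1 := by norm_num
      _ ≤ 2 ^ (m - 1) := pow_le_pow_right₀ (by norm_num) (by omega)
      _ ≤ (B - 1) ^ (m - 1) := pow_le_pow_left₀ (by norm_num) (by linarith) _
  have hGb1 : G (B - 1) < 0 := by
    have e := kg (B - 1)
    nlinarith [e]
  have hGb : 0 < G B := by
    have e := kg B
    nlinarith [e]
  have heta_gt : B - 1 < eta := by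
    obtain ⟨c, hc, hc0⟩ := intermediate_value_Ioo (by linarith : B - 1 ≤ B)
      hGc.continuousOn (Set.mem_Ioo.mpr ⟨hGb1, hGb⟩)
    have : c ≤ eta := hetamax c (by
      have : c ^ m - B * c ^ (m - 1) + 1 = 0 := hc0
      linarith)
    exact lt_of_lt_of_le hc.1 this
  have heta_eq : eta ^ (m - 1) * (B - eta) = 1 := by
    linear_combination hetam eta - heta
  have hetapos : (0:ℝ) < eta := by linarith
  have heta_lt_b : eta < B := by
    by_contra hcon
    push_neg at hcon
    nlinarith [pow_pos hetapos (m - 1), heta_eq]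
  -- eta < lam
  have hFeta : F eta < 0 := by
    have e := kf eta
    have e2 : (eta - 1) * F eta = B - 1 - eta := by
      rw [e, hetam eta]
      linear_combination -eta * heta_eq
    nlinarith [e2]
  have heta_lt_lam : eta < lam := by
    obtain ⟨c, hc, hc0⟩ := root_between eta B (by linarith) hFeta hFb
    have : c ≤ lam := hlammax c (by
      have : c ^ m - (B - 1) * ∑ i ∈ Finset.range m, c ^ i = 0 := hc0
      linarith)
    exact lt_of_lt_of_le hc.1 this
  refine ⟨⟨heta_gt, heta_lt_lam, hlam_lt_b⟩, ?_, ?_⟩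
  · -- complex roots of f
    intro z hz hzne
    by_contra hge
    push_neg at hge
    set r := ‖z‖ with hrdef
    have hr : 1 ≤ r := hge
    have hrpos : (0:ℝ) < r := by linarith
    have Efc : z ^ m * ((b:ℂ) - z) = (b:ℂ) - 1 := by
      have h0 := key_identity z ((b:ℕ) : ℂ) m
      linear_combination h0 - (z - 1) * hz
    have hC1 : ((b:ℂ) - 1) = ((B - 1 : ℝ) : ℂ) := by rw [hBdef]; push_cast; ring
    have habs : r ^ m * ‖(b:ℂ) - z‖ = B - 1 := by
      have h := congrArg (fun w : ℂ => ‖w‖) Efc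
      rwa [norm_mul, norm_pow, hC1, Complex.norm_real, Real.norm_eq_abs,
        abs_of_pos (by linarith : (0:ℝ) < B - 1)] at h
    have hCz : (b:ℂ) - z ≠ 0 := by
      intro h
      rw [h, norm_zero, mul_zero] at habs
      linarith
    have hApos : 0 < ‖(b:ℂ) - z‖ := norm_pos_iff.mpr hCz
    have hbzre : B - z.re ≤ ‖(b:ℂ) - z‖ := by
      calc B - z.re = ((b:ℂ) - z).re := by simp [hBdef]
        _ ≤ _ := Complex.re_le_norm _
    rcases eq_or_lt_of_le hr with heq | hr1
    · -- r = 1 forces z = 1, impossible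
      have hA1 : ‖(b:ℂ) - z‖ = B - 1 := by
        rw [← heq, one_pow, one_mul] at habs
        exact habs
      have hre1 : z.re = 1 :=
        le_antisymm (by linarith [Complex.re_le_norm z]) (by linarith)
      have hsq := Complex.sq_norm z
      rw [Complex.normSq_apply] at hsq
      rw [← hrdef] at hsq
      have him0 : z.im = 0 := by
        have e1 : r ^ 2 = 1 := by rw [← heq]; norm_num
        rw [hre1, e1] at hsq
        exact mul_self_eq_zero.mp (by linarith)
      have hz1 : z = 1 := Complex.ext (by simp [hre1]) (by simp [him0])
      rw [hz1] at hz
      simp at hz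
      have hzr : (1:ℝ) = (B - 1) * (m:ℝ) := by rw [hBdef]; exact_mod_cast hz
      have hmr : (2:ℝ) ≤ (m:ℝ) := by exact_mod_cast hm
      have h4 : (2:ℝ) * 2 ≤ (B - 1) * (m:ℝ) :=
        mul_le_mul (by linarith) hmr (by norm_num) (by linarith)
      linarith only [hzr, h4]
    · -- r > 1
      have hFr : 0 ≤ F r := by
        have e := kf r
        have h2 : r ^ m * (B - r) ≤ B - 1 := by
          calc r ^ m * (B - r) ≤ r ^ m * ‖(b:ℂ) - z‖ := by
                apply mul_le_mul_of_nonneg_left _ (by positivity)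
                linarith [Complex.re_le_norm z]
            _ = B - 1 := habs
        by_contra hneg
        push_neg at hneg
        have h3 : (r - 1) * F r < 0 := mul_neg_of_pos_of_neg (by linarith) hneg
        rw [e] at h3
        linarith only [h2, h3]
      have hrlam : lam ≤ r := by
        rcases hFr.eq_or_lt with heq0 | hpos
        · have hroot : r ^ m = (B - 1) * ∑ i ∈ Finset.range m, r ^ i := by
            have h := heq0.symm
            simp only [hFdef] at h
            linarith
          exact (f_pos_root_unique B m hm0 hlampos hrpos hlam hroot).le
        · by_contra hcon
          push_neg at hcon
          have hF0 : F 0 < 0 := by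
            simp only [hFdef]
            rw [zero_pow (by omega : m ≠ 0), zero_geom_sum, if_neg (by omega : ¬ m = 0)]
            linarith
          obtain ⟨c, hc, hc0⟩ := root_between 0 r (by linarith) hF0 hpos
          have hcroot : c ^ m = (B - 1) * ∑ i ∈ Finset.range m, c ^ i := by
            simp only [hFdef] at hc0
            linarith
          have := f_pos_root_unique B m hm0 hc.1 hlampos hcroot hlam
          linarith [hc.2]
      have hrB : B - 1 < r := lt_of_lt_of_le hlam_gt hrlam
      have hy : z.im = 0 := by
        by_contra hy0
        have hyabs : 0 < |z.im| := abs_pos.mpr hy0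
        have hzm : z ^ m = ((b:ℂ) - 1) * ((b:ℂ) - z)⁻¹ := by
          field_simp
          linear_combination Efc
        have h5 : (((b:ℂ) - z)⁻¹).im = z.im / ‖(b:ℂ) - z‖ ^ 2 := by
          rw [Complex.inv_im, ← Complex.sq_norm]
          congr 1
          simp
        have him : (z ^ m).im = (B - 1) * (z.im / ‖(b:ℂ) - z‖ ^ 2) := by
          rw [hzm, hC1, Complex.mul_im, Complex.ofReal_re, Complex.ofReal_im, h5]
          ring
        have hA_eq : ‖(b:ℂ) - z‖ = (B - 1) / r ^ m := by
          field_simp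
          linear_combination habs
        have hpow2 : (r ^ m) ^ 2 = r ^ (2*m) := by rw [← pow_mul, Nat.mul_comm]
        have hAsq : ‖(b:ℂ) - z‖ ^ 2 * r ^ (2*m) = (B - 1) ^ 2 := by
          have h := congrArg (fun t : ℝ => t ^ 2) habs
          rw [mul_pow, hpow2] at h
          linear_combination h
        have hbound := im_pow_le z m hm0
        have habs_im : |(z ^ m).im| = (B - 1) * |z.im| / ‖(b:ℂ) - z‖ ^ 2 := by
          rw [him, mul_div_assoc']
          rw [abs_div, abs_mul, abs_of_pos (by linarith : (0:ℝ) < B - 1),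
            abs_of_pos (by positivity : (0:ℝ) < ‖(b:ℂ) - z‖ ^ 2)]
        rw [habs_im] at hbound
        have step1 : (B - 1) * |z.im| ≤ (m:ℝ) * |z.im| * r ^ (m-1) * ‖(b:ℂ) - z‖ ^ 2 := by
          rw [div_le_iff₀ (by positivity)] at hbound
          exact hbound
        have step2 : (B - 1) * |z.im| * r ^ (2*m) ≤ (m:ℝ) * |z.im| * r ^ (m-1) * (B - 1) ^ 2 := by
          calc (B - 1) * |z.im| * r ^ (2*m)
              ≤ ((m:ℝ) * |z.im| * r ^ (m-1) * ‖(b:ℂ) - z‖ ^ 2) * r ^ (2*m) :=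
                mul_le_mul_of_nonneg_right step1 (by positivity)
            _ = (m:ℝ) * |z.im| * r ^ (m-1) * (‖(b:ℂ) - z‖ ^ 2 * r ^ (2*m)) := by ring
            _ = (m:ℝ) * |z.im| * r ^ (m-1) * (B - 1) ^ 2 := by rw [hAsq]
        have h6 : r ^ (2*m) ≤ (m:ℝ) * (B - 1) * r ^ (m-1) := by
          have hpos2 : (0:ℝ) < (B - 1) * |z.im| := mul_pos (by linarith) hyabs
          apply le_of_mul_le_mul_right _ hpos2
          calc r ^ (2*m) * ((B - 1) * |z.im|) = (B - 1) * |z.im| * r ^ (2*m) := by ring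
            _ ≤ (m:ℝ) * |z.im| * r ^ (m-1) * (B - 1) ^ 2 := step2
            _ = ((m:ℝ) * (B - 1) * r ^ (m-1)) * ((B - 1) * |z.im|) := by ring
        have h9 : r ^ (m+1) ≤ (m:ℝ) * (B - 1) := by
          have hp : (0:ℝ) < r ^ (m-1) := pow_pos hrpos _
          have hmul : r ^ (m+1) * r ^ (m-1) ≤ ((m:ℝ) * (B - 1)) * r ^ (m-1) := by
            calc r ^ (m+1) * r ^ (m-1) = r ^ (2*m) := by rw [← pow_add]; congr 1; omega
              _ ≤ (m:ℝ) * (B - 1) * r ^ (m-1) := h6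
          exact le_of_mul_le_mul_right hmul hp
        have h10 : (B - 1) ^ (m+1) < r ^ (m+1) :=
          pow_lt_pow_left₀ hrB (by linarith) (by omega)
        have h11 : (2:ℝ) ^ m ≤ (B - 1) ^ m := pow_le_pow_left₀ (by norm_num) (by linarith) m
        have h12 : (m:ℝ) < 2 ^ m := by exact_mod_cast (Nat.lt_two_pow_self (n := m))
        have hfin : r ^ (m+1) < r ^ (m+1) := by
          calc r ^ (m+1) ≤ (m:ℝ) * (B - 1) := h9
            _ < 2 ^ m * (B - 1) := mul_lt_mul_of_pos_right h12 (by linarith)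
            _ ≤ (B - 1) ^ m * (B - 1) := mul_le_mul_of_nonneg_right h11 (by linarith)
            _ = (B - 1) ^ (m+1) := (pow_succ _ _).symm
            _ < r ^ (m+1) := h10
        exact absurd hfin (lt_irrefl _)
      have hzx : z = ((z.re : ℝ) : ℂ) := Complex.ext rfl (by simp [hy])
      have hreal : z.re ^ m * (B - z.re) = B - 1 := by
        have h := Efc
        rw [hzx, hC1] at h
        exact_mod_cast h
      have hrx : r = |z.re| := by
        rw [hrdef]
        conv_lhs => rw [hzx]
        exact (Complex.norm_real _).trans (Real.norm_eq_abs _)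
      rcases le_or_gt z.re 0 with hx0 | hx0
      · have h1 : |z.re ^ m * (B - z.re)| = B - 1 := by
          rw [hreal]
          exact abs_of_pos (by linarith)
        have h2 : |z.re ^ m * (B - z.re)| = r ^ m * (B - z.re) := by
          rw [abs_mul, abs_pow, ← hrx, abs_of_pos (by linarith : (0:ℝ) < B - z.re)]
        have hr2 : (2:ℝ) ≤ r := by linarith
        have h3 : (4:ℝ) ≤ r ^ m := by
          calc (4:ℝ) = 2 ^ 2 := by norm_num
            _ ≤ 2 ^ m := pow_le_pow_right₀ (by norm_num) hm
            _ ≤ r ^ m := pow_le_pow_left₀ (by norm_num) hr2 m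
        have h4 : (4:ℝ) * B ≤ r ^ m * (B - z.re) :=
          mul_le_mul h3 (by linarith) (by linarith) (by linarith)
        linarith
      · have hxr : z.re = r := by rw [hrx, abs_of_pos hx0]
        have hxgt1 : 1 < z.re := by rw [hxr]; linarith
        have hzero : (z.re - 1) * F z.re = 0 := by
          rw [kf z.re]
          linear_combination -hreal
        have hFx : F z.re = 0 := by
          rcases mul_eq_zero.mp hzero with h | h
          · exfalso; nlinarith
          · exact h
        have hroot : z.re ^ m = (B - 1) * ∑ i ∈ Finset.range m, z.re ^ i := by
          simp only [hFdef] at hFx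
          linarith
        have hxlam : z.re = lam := f_pos_root_unique B m hm0 hx0 hlampos hroot hlam
        exact hzne (by rw [hzx, hxlam])
  · -- complex roots of g
    intro z hz hzne
    by_contra hge
    push_neg at hge
    set r := ‖z‖ with hrdef
    have hr : 1 ≤ r := hge
    have hrpos : (0:ℝ) < r := by linarith
    have hpz : z ^ m = z ^ (m-1) * z := by rw [← pow_succ, hm1]
    have Egc : z ^ (m-1) * ((b:ℂ) - z) = 1 := by linear_combination hpz - hz
    have habs : r ^ (m-1) * ‖(b:ℂ) - z‖ = 1 := by
      have h := congrArg (fun w : ℂ => ‖w‖) Egc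
      rwa [norm_mul, norm_pow, norm_one] at h
    have hCz : (b:ℂ) - z ≠ 0 := by
      intro h
      rw [h, norm_zero, mul_zero] at habs
      norm_num at habs
    have hApos : 0 < ‖(b:ℂ) - z‖ := norm_pos_iff.mpr hCz
    have hpow1 : (1:ℝ) ≤ r ^ (m-1) := one_le_pow₀ hr
    have hA1 : ‖(b:ℂ) - z‖ ≤ 1 := by nlinarith [habs, hApos]
    have hbzre : B - z.re ≤ ‖(b:ℂ) - z‖ := by
      calc B - z.re = ((b:ℂ) - z).re := by simp [hBdef]
        _ ≤ _ := Complex.re_le_norm _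
    have hxge : B - 1 ≤ z.re := by linarith
    have hrge : (2:ℝ) ≤ r := by linarith [Complex.re_le_norm z]
    have hy : z.im = 0 := by
      by_contra hy0
      have hyabs : 0 < |z.im| := abs_pos.mpr hy0
      have hzm : z ^ (m-1) = ((b:ℂ) - z)⁻¹ := by
        field_simp
        linear_combination Egc
      have h5 : (((b:ℂ) - z)⁻¹).im = z.im / ‖(b:ℂ) - z‖ ^ 2 := by
        rw [Complex.inv_im, ← Complex.sq_norm]
        congr 1
        simp
      have hA_eq : ‖(b:ℂ) - z‖ = 1 / r ^ (m-1) := by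
        field_simp
        linear_combination habs
      have hpow2 : (r ^ (m-1)) ^ 2 = r ^ (2*(m-1)) := by rw [← pow_mul, Nat.mul_comm]
      have him : (z ^ (m-1)).im = z.im * r ^ (2*(m-1)) := by
        rw [hzm, h5, hA_eq, div_pow, one_pow, hpow2]
        field_simp
      have hbound := im_pow_le z (m-1) (by omega)
      rw [him] at hbound
      have habs_im : |z.im * r ^ (2*(m-1))| = |z.im| * r ^ (2*(m-1)) := by
        rw [abs_mul, abs_of_pos (pow_pos hrpos _)]
      rw [habs_im] at hbound
      have h6 : r ^ (2*(m-1)) ≤ ((m-1:ℕ):ℝ) * r ^ (m-1-1) := by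
        nlinarith [hbound, hyabs]
      have h9 : r ^ m ≤ ((m-1:ℕ):ℝ) := by
        have hp : (0:ℝ) < r ^ (m-1-1) := pow_pos hrpos _
        have hmul : r ^ m * r ^ (m-1-1) ≤ ((m-1:ℕ):ℝ) * r ^ (m-1-1) := by
          calc r ^ m * r ^ (m-1-1) = r ^ (2*(m-1)) := by rw [← pow_add]; congr 1; omega
            _ ≤ _ := h6
        exact le_of_mul_le_mul_right hmul hp
      have h11 : (2:ℝ) ^ m ≤ r ^ m := pow_le_pow_left₀ (by norm_num) hrge m
      have h12 : ((m:ℕ):ℝ) < 2 ^ m := by exact_mod_cast (Nat.lt_two_pow_self (n := m))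
      have h13 : ((m-1:ℕ):ℝ) ≤ ((m:ℕ):ℝ) := by exact_mod_cast (by omega : m - 1 ≤ m)
      linarith
    have hzx : z = ((z.re : ℝ) : ℂ) := Complex.ext rfl (by simp [hy])
    have hreal : z.re ^ (m-1) * (B - z.re) = 1 := by
      have h := Egc
      rw [hzx] at h
      rw [hBdef]
      exact_mod_cast h
    have hgx : z.re ^ m + 1 = B * z.re ^ (m-1) := by
      have hpm : z.re ^ m = z.re ^ (m-1) * z.re := hetam z.re
      linear_combination hpm - hreal
    have hgeta : eta ^ m + 1 = B * eta ^ (m-1) := by linarith [heta]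
    have hx2 : (2:ℝ) ≤ z.re := by linarith
    have heta2 : (2:ℝ) ≤ eta := by linarith
    rcases lt_trichotomy z.re eta with h | h | h
    · exact g_aux B m hm hx2 h hgx hgeta
    · exact hzne (by rw [hzx, h])
    · exact g_aux B m hm heta2 h hgeta hgx


end Paper
end

section
/- There exists a constant C₂ > 1 (depending only on b and m) such that for every progressively overlapping sequence ζ ∈ (D_b^m)^{ℕ₀}, every totally distinct sequence ξ ∈ (D_b^m)^{ℕ₀}, and every k ∈ ℕ: C₂⁻¹ λ^k ≤ |Σ_k^ζ| ≤ C₂ λ^k and C₂⁻¹ η^k ≤ |Σ_k^ξ| ≤ C₂ η^k, where λ is the unique root in (b−1, b) of x^m − (b−1)(x^{m−1} + ⋯ + x + 1) = 0 and η is the unique root in (b−1, b) of x^m − b x^{m−1} + 1 = 0. -/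
open MeasureTheory Filter

namespace Paper


/-- The set `Σ_k^ω` of admissible words of length `k`. -/
def SigmaSet (b m : ℕ) (ω : ℕ → Fin m → Fin b) (k : ℕ) : Set (Fin k → Fin b) :=
  { d | ∀ (i : ℕ) (hi : i + m ≤ k),
      (fun j : Fin m => d ⟨i + j.1, by have := j.isLt; omega⟩) ≠ ω i }

/-- The survivor set `K^ω ⊆ [0,1]`. -/
def Kset (b m : ℕ) (ω : ℕ → Fin m → Fin b) : Set ℝ :=
  { x | ∃ d : ℕ → Fin b,
      (∀ k : ℕ, (fun j : Fin m => d (k + j.1)) ≠ ω k) ∧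
      x = ∑' i : ℕ, ((d i : ℕ) : ℝ) / (b : ℝ) ^ (i + 1) }

open Classical in
/-- The adjacency matrix `A_d` of the subshift of finite type with forbidden word `d`. -/
noncomputable def adjMat (b m : ℕ) (d : Fin m → Fin b) :
    Matrix (Fin (m - 1) → Fin b) (Fin (m - 1) → Fin b) ℝ :=
  fun u v =>
    if ((∀ (i : ℕ) (h : i + 1 < m - 1), u ⟨i + 1, h⟩ = v ⟨i, by omega⟩) ∧
        ¬ ((∀ (j : ℕ) (h : j < m - 1), u ⟨j, h⟩ = d ⟨j, by omega⟩) ∧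
           (∀ (h2 : m - 2 < m - 1), v ⟨m - 2, h2⟩ = d ⟨m - 1, by omega⟩)))
    then 1 else 0

/-- The norm `‖M‖ = ∑_{i,j} |m_{ij}|` of a real square matrix. -/
noncomputable def matNorm {n : Type*} [Fintype n] (M : Matrix n n ℝ) : ℝ :=
  ∑ i, ∑ j, |M i j|

/-- The product `A_{ω^0} A_{ω^1} ⋯ A_{ω^{n-1}}`. -/
noncomputable def prodA (b m : ℕ) (ω : ℕ → Fin m → Fin b) (n : ℕ) :
    Matrix (Fin (m - 1) → Fin b) (Fin (m - 1) → Fin b) ℝ :=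
  ((List.range n).map (fun i => adjMat b m (ω i))).prod

/-- `ω` is progressively overlapping at position `k`. -/
def ProgOverlapAt (b m : ℕ) (ω : ℕ → Fin m → Fin b) (k : ℕ) : Prop :=
  ∀ j : ℕ, 1 ≤ j → j ≤ min k (m - 1) →
    ∀ (t : ℕ) (h : t + j < m),
      ω k ⟨t, by omega⟩ = ω (k - j) ⟨t + j, h⟩

/-- `ω` is totally distinct at position `k`. -/
def TotDistinctAt (b m : ℕ) (ω : ℕ → Fin m → Fin b) (k : ℕ) : Prop :=
  ∀ j : ℕ, 1 ≤ j → j ≤ min k (m - 1) →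
    ¬ (∀ (t : ℕ) (h : t + j < m),
        ω k ⟨t, by omega⟩ = ω (k - j) ⟨t + j, h⟩)

/-- A set `F ⊆ ℝ` is `s`-Ahlfors regular. -/
def AhlforsRegular (F : Set ℝ) (s : ℝ) : Prop :=
  ∃ c : ℝ, 1 ≤ c ∧ ∀ x ∈ F, ∀ r : ℝ, 0 < r → r < 1 →
    ENNReal.ofReal (c⁻¹ * r ^ s) ≤ Measure.hausdorffMeasure s (F ∩ Metric.closedBall x r) ∧
    Measure.hausdorffMeasure s (F ∩ Metric.closedBall x r) ≤ ENNReal.ofReal (c * r ^ s)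


variable {b m : ℕ}

def win {n : ℕ} (d : Fin n → Fin b) (i : ℕ) (h : i + m ≤ n) : Fin m → Fin b :=
  fun j => d ⟨i + j.1, by have := j.isLt; omega⟩

lemma mem_sigma_iff {ω : ℕ → Fin m → Fin b} {k : ℕ} {d : Fin k → Fin b} :
    d ∈ SigmaSet b m ω k ↔ ∀ i (h : i + m ≤ k), win d i h ≠ ω i := Iff.rfl

lemma win_eq_iff {n : ℕ} {d : Fin n → Fin b} {i : ℕ} {h : i + m ≤ n} {w : Fin m → Fin b} :
    win d i h = w ↔ ∀ t (ht : t < m), d ⟨i + t, by omega⟩ = w ⟨t, ht⟩ := by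
  constructor
  · intro he t ht
    exact congrFun he ⟨t, ht⟩
  · intro he
    funext j
    exact he j.1 j.isLt

lemma sigma_univ {ω : ℕ → Fin m → Fin b} {k : ℕ} (hk : k < m) :
    SigmaSet b m ω k = Set.univ := by
  ext d
  simp only [Set.mem_univ, iff_true, mem_sigma_iff]
  intro i hi
  omega

noncomputable def Ncard (b m : ℕ) (ω : ℕ → Fin m → Fin b) (k : ℕ) : ℕ :=
  Nat.card (SigmaSet b m ω k)

lemma Ncard_of_lt {ω : ℕ → Fin m → Fin b} {k : ℕ} (hk : k < m) :
    Ncard b m ω k = b ^ k := by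
  rw [Ncard, sigma_univ hk]
  rw [Nat.card_congr (Equiv.Set.univ _), Nat.card_eq_fintype_card]
  simp



namespace Paper2
open Paper
variable {b m : ℕ}

lemma win_init {k : ℕ} {e : Fin (k+1) → Fin b} {i : ℕ} (h : i + m ≤ k) :
    win (Fin.init e) i h = win (m := m) e i (by omega) := rfl

lemma mem_sigma_succ_iff {ω : ℕ → Fin m → Fin b} {k : ℕ} (hm1 : m ≤ k+1)
    {e : Fin (k+1) → Fin b} :
    e ∈ SigmaSet b m ω (k+1) ↔
      Fin.init e ∈ SigmaSet b m ω k ∧ win e (k+1-m) (by omega) ≠ ω (k+1-m) := by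
  constructor
  · intro he
    refine ⟨?_, he (k+1-m) (by omega)⟩
    intro i hi
    exact he i (by omega)
  · rintro ⟨h1, h2⟩ i hi
    rcases Nat.lt_or_ge i (k+1-m) with hlt | hge
    · exact h1 i (by omega)
    · have : i = k+1-m := by omega
      subst this
      exact h2

def snocEquiv (k : ℕ) (S : Set (Fin k → Fin b)) :
    {e : Fin (k+1) → Fin b // Fin.init e ∈ S} ≃ S × Fin b where
  toFun e := (⟨Fin.init e.1, e.2⟩, e.1 (Fin.last k))
  invFun p := ⟨Fin.snoc p.1.1 p.2, by
    simpa using p.1.2⟩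
  left_inv e := Subtype.ext (Fin.snoc_init_self e.1)
  right_inv p := by
    ext <;> simp

lemma card_init_mem (k : ℕ) (S : Set (Fin k → Fin b)) :
    Nat.card {e : Fin (k+1) → Fin b // Fin.init e ∈ S} = Nat.card S * b := by
  have := Nat.card_congr (snocEquiv k S)
  rw [Nat.card_prod, Nat.card_eq_fintype_card (α := Fin b), Fintype.card_fin] at this
  exact this


def BadSet (ω : ℕ → Fin m → Fin b) (k : ℕ) : Set (Fin (k+1) → Fin b) :=
  {e | Fin.init e ∈ SigmaSet b m ω k ∧
    ∀ t (ht : t < m) (h2 : k+1-m+t < k+1), e ⟨k+1-m+t, h2⟩ = ω (k+1-m) ⟨t, ht⟩}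

lemma mem_bad_iff {ω : ℕ → Fin m → Fin b} {k : ℕ} (hm1 : m ≤ k+1)
    {e : Fin (k+1) → Fin b} :
    e ∈ BadSet ω k ↔
      Fin.init e ∈ SigmaSet b m ω k ∧ win e (k+1-m) (by omega) = ω (k+1-m) := by
  unfold BadSet
  rw [Set.mem_setOf_eq, win_eq_iff]
  constructor
  · rintro ⟨h1, h2⟩
    exact ⟨h1, fun t ht => h2 t ht (by omega)⟩
  · rintro ⟨h1, h2⟩
    exact ⟨h1, fun t ht _ => h2 t ht⟩

lemma split {ω : ℕ → Fin m → Fin b} {k : ℕ} (hm1 : m ≤ k+1) :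
    Ncard b m ω k * b = Ncard b m ω (k+1) + Nat.card ↥(BadSet ω k) := by
  have hU : {e : Fin (k+1) → Fin b | Fin.init e ∈ SigmaSet b m ω k} =
      SigmaSet b m ω (k+1) ∪ BadSet ω k := by
    ext e
    rw [Set.mem_union, mem_sigma_succ_iff hm1, mem_bad_iff hm1, Set.mem_setOf_eq]
    by_cases hw : win e (k+1-m) (by omega) = ω (k+1-m) <;> tauto
  have hd : Disjoint (SigmaSet b m ω (k+1)) (BadSet ω k) := by
    rw [Set.disjoint_left]
    intro e he1 he2
    rw [mem_sigma_succ_iff hm1] at he1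
    rw [mem_bad_iff hm1] at he2
    exact he1.2 he2.2
  have hcard := card_init_mem (b := b) k (SigmaSet b m ω k)
  have h2 : Nat.card {e : Fin (k+1) → Fin b // Fin.init e ∈ SigmaSet b m ω k} =
      Nat.card ↥(SigmaSet b m ω (k+1)) + Nat.card ↥(BadSet ω k) := by
    have h1 : Nat.card {e : Fin (k+1) → Fin b // Fin.init e ∈ SigmaSet b m ω k}
        = Set.ncard {e : Fin (k+1) → Fin b | Fin.init e ∈ SigmaSet b m ω k} :=
      (Nat.card_coe_set_eq _)
    rw [h1, hU, Set.ncard_union_eq hd (Set.toFinite _) (Set.toFinite _),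
      Nat.card_coe_set_eq, Nat.card_coe_set_eq]
  rw [hcard] at h2
  exact h2.symm ▸ rfl

lemma badInjOn {ω : ℕ → Fin m → Fin b} {k : ℕ} (hm : 2 ≤ m) (hm1 : m ≤ k+1) :
    Set.InjOn Fin.init (BadSet ω k) := by
  intro e he e' he' hee
  have h1 : e (Fin.last k) = e' (Fin.last k) := by
    have hlast : Fin.last k = (⟨k+1-m+(m-1), by omega⟩ : Fin (k+1)) := by
      ext; simp; omega
    rw [hlast, he.2 (m-1) (by omega) (by omega), he'.2 (m-1) (by omega) (by omega)]
  rw [← Fin.snoc_init_self e, ← Fin.snoc_init_self e', hee, h1]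

lemma bad_le {ω : ℕ → Fin m → Fin b} {k : ℕ} (hm : 2 ≤ m) (hm1 : m ≤ k+1) :
    Nat.card ↥(BadSet ω k) ≤ Ncard b m ω k := by
  rw [Nat.card_coe_set_eq, ← Set.ncard_image_of_injOn (badInjOn hm hm1)]
  rw [Ncard, Nat.card_coe_set_eq]
  refine Set.ncard_le_ncard ?_ (Set.toFinite _)
  rintro d ⟨e, he, rfl⟩
  exact he.1

lemma growth {ω : ℕ → Fin m → Fin b} (hb : 3 ≤ b) (hm : 2 ≤ m) (k : ℕ) :
    (b-1) * Ncard b m ω k ≤ Ncard b m ω (k+1) := by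
  rcases Nat.lt_or_ge (k+1) m with h | h
  · rw [Ncard_of_lt (by omega), Ncard_of_lt h]
    calc (b-1) * b^k ≤ b * b^k := Nat.mul_le_mul_right _ (by omega)
    _ = b^(k+1) := by ring
  · have h1 := split (ω := ω) (k := k) h
    have h2 := bad_le (ω := ω) (k := k) hm h
    have h3 : Ncard b m ω k * b = Ncard b m ω k * (b-1) + Ncard b m ω k := by
      rw [← Nat.mul_succ]
      congr 1
      omega
    rw [h3] at h1
    rw [Nat.mul_comm]
    omega

lemma growth_pow {ω : ℕ → Fin m → Fin b} (hb : 3 ≤ b) (hm : 2 ≤ m) (k r : ℕ) :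
    (b-1)^r * Ncard b m ω k ≤ Ncard b m ω (k+r) := by
  induction r with
  | zero => simp
  | succ n ih =>
    have h := growth (ω := ω) hb hm (k+n)
    calc (b-1)^(n+1) * Ncard b m ω k = (b-1) * ((b-1)^n * Ncard b m ω k) := by ring
    _ ≤ (b-1) * Ncard b m ω (k+n) := Nat.mul_le_mul_left _ ih
    _ ≤ Ncard b m ω (k+n+1) := h


lemma td_bad_card {ξ : ℕ → Fin m → Fin b} (hm : 2 ≤ m)
    (hξ : ∀ k : ℕ, 1 ≤ k → TotDistinctAt b m ξ k) {k : ℕ} (hm1 : m ≤ k+1) :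
    Nat.card ↥(BadSet ξ k) = Ncard b m ξ (k+1-m) := by
  set K := k+1-m with hK
  have hKk : K + m = k + 1 := by omega
  set F : (Fin (k+1) → Fin b) → (Fin K → Fin b) :=
    fun e => (fun i => e ⟨i.1, by omega⟩) with hF
  have hinj : Set.InjOn F (BadSet ξ k) := by
    intro e he e' he' hee
    funext i
    rcases Nat.lt_or_ge i.1 K with h | h
    · have h0 := congrFun hee ⟨i.1, h⟩
      simpa [hF] using h0
    · have ht : i.1 - K < m := by omega
      have h2 : (i : Fin (k+1)) = ⟨K + (i.1 - K), by omega⟩ := by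
        ext; simp; omega
      rw [h2]
      rw [he.2 (i.1 - K) ht (by omega), he'.2 (i.1 - K) ht (by omega)]
  have himg : F '' (BadSet ξ k) = SigmaSet b m ξ K := by
    apply Set.Subset.antisymm
    · rintro d ⟨e, he, rfl⟩
      intro i hi
      exact he.1 i (by omega)
    · intro d hd
      classical
      refine ⟨fun i => if h : i.1 < K then d ⟨i.1, h⟩ else ξ K ⟨i.1 - K, by omega⟩, ⟨?_, ?_⟩, ?_⟩
      · -- init ∈ SigmaSet k
        intro i hi
        intro hcon
        rcases Nat.lt_or_ge (i+m) (K+1) with hc | hc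
        · -- window inside d
          apply hd i (by omega)
          funext j
          have hji := congrFun hcon j
          simp only [Fin.init] at hji
          rw [← hji]
          simp only [Fin.castSucc, Fin.castAdd, Fin.castLE]
          rw [dif_pos (by omega : i + j.1 < K)]
        · -- overlapping window: contradiction with total distinctness
          have hiK : i < K := by omega
          set j := K - i with hj
          have hj1 : 1 ≤ j := by omega
          have hjm : j ≤ m - 1 := by omega
          have hK1 : 1 ≤ K := by omega
          apply hξ K hK1 j hj1 (le_min (by omega) hjm)
          intro t htj
          have hKij : K - j = i := by omega
          rw [hKij]
          have h1 := congrFun hcon ⟨t + j, by omega⟩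
          simp only [Fin.init] at h1
          rw [← h1]
          simp only [Fin.castSucc, Fin.castAdd, Fin.castLE]
          rw [dif_neg (by omega : ¬ (i + (t+j) < K))]
          congr 1
          ext; simp; omega
      · -- window at K equals ξ K
        intro t ht h2
        have hcon2 : ¬ (K + t < K) := by omega
        simp only [← hK, dif_neg hcon2]
        congr 1
        ext; simp
      · funext i
        simp only [hF]
        rw [dif_pos i.isLt]
  rw [Nat.card_coe_set_eq, ← Set.ncard_image_of_injOn hinj, himg,
    Ncard, Nat.card_coe_set_eq]

lemma td_rec {ξ : ℕ → Fin m → Fin b} (hm : 2 ≤ m)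
    (hξ : ∀ k : ℕ, 1 ≤ k → TotDistinctAt b m ξ k) {k : ℕ} (hm1 : m ≤ k+1) :
    Ncard b m ξ k * b = Ncard b m ξ (k+1) + Ncard b m ξ (k+1-m) := by
  rw [split hm1, td_bad_card hm hξ hm1]


lemma fin_mk_eq {n a c : ℕ} (ha : a < n) (hc : c < n) (h : a = c) :
    (⟨a, ha⟩ : Fin n) = ⟨c, hc⟩ := by subst h; rfl

lemma snoc_at {n : ℕ} {α : Type*} (d : Fin n → α) (x : α) (t : ℕ) (h : t < n)
    (h2 : t < n+1) : Fin.snoc (α := fun _ => α) d x ⟨t, h2⟩ = d ⟨t, h⟩ := by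
  have he : (⟨t, h2⟩ : Fin (n+1)) = Fin.castSucc ⟨t, h⟩ := rfl
  rw [he, Fin.snoc_castSucc]

lemma snoc_at_last {n : ℕ} {α : Type*} (d : Fin n → α) (x : α)
    (h2 : n < n+1) : Fin.snoc (α := fun _ => α) d x ⟨n, h2⟩ = x := by
  have he : (⟨n, h2⟩ : Fin (n+1)) = Fin.last n := rfl
  rw [he, Fin.snoc_last]

def sSeq (hm : 1 ≤ m) (ω : ℕ → Fin m → Fin b) (t : ℕ) : Fin b :=
  if h : t < m then ω 0 ⟨t, h⟩ else ω (t+1-m) ⟨m-1, by omega⟩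

lemma po_s {ζ : ℕ → Fin m → Fin b} (hm : 2 ≤ m)
    (hζ : ∀ k : ℕ, 1 ≤ k → ProgOverlapAt b m ζ k) :
    ∀ i t (ht : t < m), ζ i ⟨t, ht⟩ = sSeq (by omega) ζ (i + t) := by
  intro i
  induction i with
  | zero =>
    intro t ht
    unfold sSeq
    rw [dif_pos (by omega : 0 + t < m)]
    congr 1
    ext
    simp
  | succ n ih =>
    intro t ht
    rcases Nat.lt_or_ge t (m-1) with h | h
    · have hpo := hζ (n+1) (by omega) 1 (by omega) (le_min (by omega) (by omega))
        t (by omega : t + 1 < m)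
      simp only [Nat.add_sub_cancel] at hpo
      rw [hpo, ih (t+1) (by omega)]
      congr 1
      omega
    · have ht1 : t = m - 1 := by omega
      subst ht1
      unfold sSeq
      rw [dif_neg (by omega : ¬ (n + 1 + (m-1) < m))]
      have he : n + 1 + (m-1) + 1 - m = n + 1 := by omega
      rw [he]

def Qset (ω : ℕ → Fin m → Fin b) (sq : ℕ → Fin b) (k r : ℕ) : Set (Fin k → Fin b) :=
  {d | d ∈ SigmaSet b m ω k ∧ ∀ t (h : t < k), k ≤ t + r → d ⟨t, h⟩ = sq t}

noncomputable def Qcard (ω : ℕ → Fin m → Fin b) (sq : ℕ → Fin b) (k r : ℕ) : ℕ :=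
  Nat.card ↥(Qset ω sq k r)

lemma Qset_zero {ω : ℕ → Fin m → Fin b} {sq : ℕ → Fin b} {k : ℕ} :
    Qset ω sq k 0 = SigmaSet b m ω k := by
  ext d
  exact ⟨fun h => h.1, fun h => ⟨h, fun t ht htr => by omega⟩⟩

lemma Qset_anti {ω : ℕ → Fin m → Fin b} {sq : ℕ → Fin b} {k r r' : ℕ} (hr : r ≤ r') :
    Qset ω sq k r' ⊆ Qset ω sq k r :=
  fun d hd => ⟨hd.1, fun t ht htr => hd.2 t ht (by omega)⟩

lemma Qcard_le {ω : ℕ → Fin m → Fin b} {sq : ℕ → Fin b} {k r : ℕ} :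
    Qcard ω sq k r ≤ Ncard b m ω (k - r) := by
  set F : (Fin k → Fin b) → (Fin (k-r) → Fin b) :=
    fun e => (fun i => e ⟨i.1, by omega⟩) with hF
  have hinj : Set.InjOn F (Qset ω sq k r) := by
    intro e he e' he' hee
    funext i
    rcases Nat.lt_or_ge i.1 (k-r) with h | h
    · have h0 := congrFun hee ⟨i.1, h⟩
      simpa [hF] using h0
    · rw [he.2 i.1 i.isLt (by omega), he'.2 i.1 i.isLt (by omega)]
  have himg : F '' (Qset ω sq k r) ⊆ SigmaSet b m ω (k - r) := by
    rintro d ⟨e, he, rfl⟩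
    intro i hi
    exact he.1 i (by omega)
  rw [Qcard, Nat.card_coe_set_eq, ← Set.ncard_image_of_injOn hinj,
    Ncard, Nat.card_coe_set_eq]
  exact Set.ncard_le_ncard himg (Set.toFinite _)

lemma po_bad_card {ζ : ℕ → Fin m → Fin b} (hm : 2 ≤ m) {sq : ℕ → Fin b}
    (hs : ∀ i t (ht : t < m), ζ i ⟨t, ht⟩ = sq (i + t)) {k : ℕ} (hm1 : m ≤ k+1) :
    Nat.card ↥(BadSet ζ k) = Qcard ζ sq k (m-1) := by
  have himg : Fin.init '' (BadSet ζ k) = Qset ζ sq k (m-1) := by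
    apply Set.Subset.antisymm
    · rintro d ⟨e, he, rfl⟩
      refine ⟨he.1, ?_⟩
      intro t ht htr
      have hu : t = k+1-m + (t - (k+1-m)) := by omega
      have hum : t - (k+1-m) < m := by omega
      have hpos : (⟨t, by omega⟩ : Fin (k+1)) = ⟨k+1-m + (t - (k+1-m)), by omega⟩ := by
        ext; simp; omega
      calc Fin.init e ⟨t, ht⟩ = e ⟨t, by omega⟩ := rfl
      _ = e ⟨k+1-m + (t - (k+1-m)), by omega⟩ := by rw [← hpos]
      _ = ζ (k+1-m) ⟨t - (k+1-m), hum⟩ := he.2 _ hum _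
      _ = sq (k+1-m + (t - (k+1-m))) := hs _ _ hum
      _ = sq t := by rw [← hu]
    · intro d hd
      refine ⟨Fin.snoc d (sq k), ⟨?_, ?_⟩, by simp⟩
      · simpa using hd.1
      · intro u hu h2
        rcases Nat.lt_or_ge (k+1-m+u) k with hlt | hge
        · rw [snoc_at d (sq k) _ hlt h2, hd.2 _ hlt (by omega), ← hs _ _ hu]
        · have huk : k+1-m+u = k := by omega
          rw [congrArg (Fin.snoc d (sq k)) (fin_mk_eq h2 (by omega) huk),
            snoc_at_last, hs _ _ hu, huk]
  rw [Nat.card_coe_set_eq, ← Set.ncard_image_of_injOn (badInjOn hm hm1), himg,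
    Qcard, Nat.card_coe_set_eq]

lemma po_rec {ζ : ℕ → Fin m → Fin b} (hm : 2 ≤ m) {sq : ℕ → Fin b}
    (hs : ∀ i t (ht : t < m), ζ i ⟨t, ht⟩ = sq (i + t)) {k r : ℕ} (hm1 : m ≤ k+1)
    (hr : r + 1 ≤ m - 1) :
    Qcard ζ sq (k+1) (r+1) + Qcard ζ sq k (m-1) = Qcard ζ sq k r := by
  have hwin : ∀ e : Fin (k+1) → Fin b,
      (∀ u (hu : u < m), e ⟨k+1-m+u, by omega⟩ = sq (k+1-m+u)) →
      win e (k+1-m) (by omega) = ζ (k+1-m) := by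
    intro e he
    rw [win_eq_iff]
    intro u hu
    rw [he u hu, hs _ _ hu]
  -- injectivity
  have hinj : Set.InjOn Fin.init (Qset ζ sq (k+1) (r+1)) := by
    intro e he e' he' hee
    have h1 : e (Fin.last k) = e' (Fin.last k) := by
      have hl : Fin.last k = (⟨k, by omega⟩ : Fin (k+1)) := rfl
      rw [hl, he.2 k (by omega) (by omega), he'.2 k (by omega) (by omega)]
    rw [← Fin.snoc_init_self e, ← Fin.snoc_init_self e', hee, h1]
  have himg : Fin.init '' (Qset ζ sq (k+1) (r+1))
      = Qset ζ sq k r \ Qset ζ sq k (m-1) := by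
    apply Set.Subset.antisymm
    · rintro d ⟨e, he, rfl⟩
      have hek : e ⟨k, by omega⟩ = sq k := he.2 k (by omega) (by omega)
      refine ⟨⟨((mem_sigma_succ_iff hm1).mp he.1).1, ?_⟩, ?_⟩
      · intro t ht htr
        exact he.2 t (by omega) (by omega)
      · intro hq
        apply ((mem_sigma_succ_iff hm1).mp he.1).2
        apply hwin
        intro u hu
        rcases Nat.lt_or_ge (k+1-m+u) k with hlt | hge
        · exact hq.2 _ hlt (by omega)
        · have huk : k+1-m+u = k := by omega
          rw [congrArg e (fin_mk_eq (by omega) (by omega : k < k+1) huk), hek, huk]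
    · rintro d ⟨hd, hnd⟩
      refine ⟨Fin.snoc d (sq k), ⟨?_, ?_⟩, by simp⟩
      · rw [mem_sigma_succ_iff hm1]
        refine ⟨by simpa using hd.1, ?_⟩
        intro hcon
        apply hnd
        refine ⟨hd.1, ?_⟩
        intro t ht htr
        have hum : t - (k+1-m) < m := by omega
        have h3 := congrFun hcon ⟨t - (k+1-m), hum⟩
        simp only [win] at h3
        have hidx : k+1-m + (t - (k+1-m)) = t := by omega
        rw [congrArg (Fin.snoc d (sq k)) (fin_mk_eq (by omega) (by omega : t < k+1) hidx)]
          at h3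
        rw [snoc_at d (sq k) t ht] at h3
        rw [h3, hs _ _ hum, hidx]
      · intro t ht htr
        rcases Nat.lt_or_ge t k with hlt | hge
        · rw [snoc_at d (sq k) t hlt ht]
          exact hd.2 _ hlt (by omega)
        · have htk : t = k := by omega
          rw [congrArg (Fin.snoc d (sq k)) (fin_mk_eq ht (by omega) htk),
            snoc_at_last, htk]
  have hsub : Qset ζ sq k (m-1) ⊆ Qset ζ sq k r := Qset_anti (by omega)
  have := Set.ncard_diff_add_ncard_of_subset hsub (Set.toFinite _)
  rw [← himg, Set.ncard_image_of_injOn hinj] at this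
  simpa [Qcard, Nat.card_coe_set_eq] using this

lemma po_split {ζ : ℕ → Fin m → Fin b} (hm : 2 ≤ m) {sq : ℕ → Fin b}
    (hs : ∀ i t (ht : t < m), ζ i ⟨t, ht⟩ = sq (i + t)) {k : ℕ} (hm1 : m ≤ k+1) :
    Ncard b m ζ k * b = Ncard b m ζ (k+1) + Qcard ζ sq k (m-1) := by
  rw [split hm1, po_bad_card hm hs hm1]

lemma Qcard_zero {ω : ℕ → Fin m → Fin b} {sq : ℕ → Fin b} {k : ℕ} :
    Qcard ω sq k 0 = Ncard b m ω k := by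
  rw [Qcard, Qset_zero, Ncard]


lemma lam_key {M : ℕ} {bR lam : ℝ} (hlam : lam ^ (M+1) = (bR-1) * ∑ i ∈ Finset.range (M+1), lam ^ i) :
    (bR - lam) * ∑ i ∈ Finset.range (M+1), lam ^ i = 1 := by
  have e2 := Finset.sum_range_succ' (fun i => lam ^ i) (M+1)
  have e1 := Finset.sum_range_succ (fun i => lam ^ i) (M+1)
  have e3 : ∑ i ∈ Finset.range (M+1), lam ^ (i+1)
      = lam * ∑ i ∈ Finset.range (M+1), lam ^ i := by
    rw [Finset.mul_sum]
    exact Finset.sum_congr rfl (fun j _ => by ring)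
  simp only [pow_zero] at e2
  rw [e1, e3] at e2
  -- e2 : ∑_{range (M+1)} + lam^(M+1) = lam * ∑_{range(M+1)} + 1
  linear_combination e2 - hlam

lemma eta_key {M : ℕ} {bR eta : ℝ} (heta0 : 0 < eta)
    (heta : eta ^ (M+1) = bR * eta ^ M - 1) :
    (eta⁻¹) ^ M = bR - eta := by
  have h1 : (bR - eta) * eta ^ M = 1 := by linear_combination -heta
  rw [inv_pow]
  exact (eq_inv_of_mul_eq_one_left h1).symm

lemma geom_W {ρ : ℝ} {W : ℕ → ℝ} (hrec : ∀ K, W (K+1) = ρ * W K) :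
    ∀ K, W K = ρ ^ K * W 0 := by
  intro K
  induction K with
  | zero => simp
  | succ n ih => rw [hrec n, ih, pow_succ]; ring



lemma final_bounds (hb : 3 ≤ b) (hm : 2 ≤ m) {ρ : ℝ} (hρ1 : ((b:ℝ)-1) < ρ) (hρ2 : ρ < (b:ℝ))
    {ω : ℕ → Fin m → Fin b}
    (W : ℕ → ℝ) (hWrec : ∀ K, W (K+1) = ρ * W K)
    (hub : ∀ K, W K ≤ (Ncard b m ω (K+(m-1)) : ℝ))
    (hlb : ∀ K, (Ncard b m ω (K+(m-1)) : ℝ)/2 ≤ W K) :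
    ∀ k, 1 ≤ k → (2*(b:ℝ)^(2*m))⁻¹ * ρ^k ≤ (Ncard b m ω k : ℝ) ∧
      (Ncard b m ω k : ℝ) ≤ (2*(b:ℝ)^(2*m)) * ρ^k := by
  have hbR : (3:ℝ) ≤ (b:ℝ) := by exact_mod_cast hb
  have hρ2' : (2:ℝ) ≤ ρ := by linarith
  have hρ0 : (0:ℝ) < ρ := by linarith
  have hC0 : (0:ℝ) < 2*(b:ℝ)^(2*m) := by positivity
  have hX0 : (Ncard b m ω (0+(m-1)) : ℝ) = (b:ℝ)^(m-1) := by
    rw [Nat.zero_add, Ncard_of_lt (by omega : m-1 < m)]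
    push_cast
    rfl
  have hW0u : W 0 ≤ (b:ℝ)^(m-1) := hX0 ▸ hub 0
  have hW0l : (b:ℝ)^(m-1)/2 ≤ W 0 := hX0 ▸ hlb 0
  have hCinv : (2*(b:ℝ)^(2*m))⁻¹ * (b:ℝ)^(2*m) = 1/2 := by
    field_simp
  intro k hk
  have hρk1 : (1:ℝ) ≤ ρ^k := one_le_pow₀ (by linarith)
  rcases Nat.lt_or_ge k (m-1) with hsml | hbig
  · -- small case : N k = b^k
    have hNk : (Ncard b m ω k : ℝ) = (b:ℝ)^k := by
      rw [Ncard_of_lt (by omega : k < m)]; push_cast; rfl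
    rw [hNk]
    constructor
    · have h1 : ρ^k ≤ (b:ℝ)^(2*m) := by
        calc ρ^k ≤ (b:ℝ)^k := by
              apply pow_le_pow_left₀ (by linarith) (by linarith)
        _ ≤ (b:ℝ)^(2*m) := by
              apply pow_le_pow_right₀ (by linarith) (by omega)
      have h2 : (2*(b:ℝ)^(2*m))⁻¹ * ρ^k ≤ (2*(b:ℝ)^(2*m))⁻¹ * (b:ℝ)^(2*m) := by
        apply mul_le_mul_of_nonneg_left h1 (by positivity)
      have h4 : (1:ℝ) ≤ (b:ℝ)^k := one_le_pow₀ (by linarith)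
      rw [hCinv] at h2
      linarith
    · calc (b:ℝ)^k ≤ (b:ℝ)^(2*m) := by
            apply pow_le_pow_right₀ (by linarith) (by omega)
      _ = (b:ℝ)^(2*m) * 1 := by ring
      _ ≤ (b:ℝ)^(2*m) * (2 * ρ^k) := by
            apply mul_le_mul_of_nonneg_left (by linarith) (by positivity)
      _ = (2*(b:ℝ)^(2*m)) * ρ^k := by ring
  · -- large case
    obtain ⟨K, rfl⟩ : ∃ K, k = K + (m-1) := ⟨k - (m-1), by omega⟩
    have hXW := geom_W hWrec K
    have hXu := hub K
    have hXl := hlb K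
    have hρK : (0:ℝ) < ρ^K := by positivity
    have hbm1 : ρ^(m-1) ≤ (b:ℝ)^(m-1) := pow_le_pow_left₀ (by linarith) (by linarith) _
    have hsplitpow : ρ^(K+(m-1)) = ρ^K * ρ^(m-1) := pow_add ρ K (m-1)
    constructor
    · -- lower bound
      have h1 : ρ^(K+(m-1)) ≤ ρ^K * (b:ℝ)^(m-1) := by
        rw [hsplitpow]
        exact mul_le_mul_of_nonneg_left hbm1 (le_of_lt hρK)
      have h2 : ρ^K * ((b:ℝ)^(m-1)/2) ≤ W K := by
        rw [hXW]
        calc ρ^K * ((b:ℝ)^(m-1)/2) ≤ ρ^K * W 0 :=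
              mul_le_mul_of_nonneg_left hW0l (le_of_lt hρK)
        _ = ρ^K * W 0 := rfl
      have h3 : (2*(b:ℝ)^(2*m))⁻¹ ≤ 1/2 := by
        rw [← mul_one ((2*(b:ℝ)^(2*m))⁻¹)]
        calc (2*(b:ℝ)^(2*m))⁻¹ * 1 ≤ (2*(b:ℝ)^(2*m))⁻¹ * (b:ℝ)^(2*m) := by
              apply mul_le_mul_of_nonneg_left (one_le_pow₀ (by linarith)) (by positivity)
        _ = 1/2 := hCinv
      have h5 : (0:ℝ) ≤ ρ^(K+(m-1)) := by positivity
      calc (2*(b:ℝ)^(2*m))⁻¹ * ρ^(K+(m-1)) ≤ (1/2) * ρ^(K+(m-1)) :=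
            mul_le_mul_of_nonneg_right h3 h5
      _ ≤ (1/2) * (ρ^K * (b:ℝ)^(m-1)) := by linarith
      _ = ρ^K * ((b:ℝ)^(m-1)/2) := by ring
      _ ≤ W K := h2
      _ ≤ (Ncard b m ω (K+(m-1)) : ℝ) := hXu
    · -- upper bound
      have h1 : (Ncard b m ω (K+(m-1)) : ℝ) ≤ 2 * (ρ^K * (b:ℝ)^(m-1)) := by
        have := hXl
        rw [hXW] at this
        have h2 : ρ^K * W 0 ≤ ρ^K * (b:ℝ)^(m-1) :=
          mul_le_mul_of_nonneg_left hW0u (le_of_lt hρK)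
        linarith
      have h3 : ρ^K ≤ ρ^(K+(m-1)) := by
        apply pow_le_pow_right₀ (by linarith) (by omega)
      have h4 : (b:ℝ)^(m-1) ≤ (b:ℝ)^(2*m) := by
        apply pow_le_pow_right₀ (by linarith) (by omega)
      have h5 : (0:ℝ) ≤ (b:ℝ)^(m-1) := by positivity
      calc (Ncard b m ω (K+(m-1)) : ℝ) ≤ 2 * (ρ^K * (b:ℝ)^(m-1)) := h1
      _ ≤ 2 * (ρ^(K+(m-1)) * (b:ℝ)^(2*m)) := by
            apply mul_le_mul_of_nonneg_left ?_ (by norm_num)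
            apply mul_le_mul h3 h4 h5 (by positivity)
      _ = (2*(b:ℝ)^(2*m)) * ρ^(K+(m-1)) := by ring


lemma sum_half_bound {M : ℕ} {X : ℝ} (hX : 0 ≤ X) (f : ℕ → ℝ)
    (hf : ∀ j ∈ Finset.range M, f j ≤ X / 2^(M+1)) :
    ∑ j ∈ Finset.range M, f j ≤ X / 2 := by
  have h1 : ∑ j ∈ Finset.range M, f j ≤ ∑ _j ∈ Finset.range M, X / 2^(M+1) :=
    Finset.sum_le_sum hf
  rw [Finset.sum_const, Finset.card_range, nsmul_eq_mul] at h1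
  have hM2 : (M:ℝ) ≤ 2^M := by exact_mod_cast (Nat.lt_two_pow_self (n := M)).le
  have h2 : (M:ℝ) * (X / 2^(M+1)) ≤ 2^M * (X / 2^(M+1)) :=
    mul_le_mul_of_nonneg_right hM2 (by positivity)
  have h3 : (2:ℝ)^M * (X / 2^(M+1)) = X / 2 := by
    rw [pow_succ]
    field_simp
  linarith

lemma td_hW (hb : 3 ≤ b) (hm : 2 ≤ m) {eta : ℝ} (heta1 : ((b:ℝ)-1) < eta) (heta2 : eta < (b:ℝ))
    (heta : eta ^ m = (b:ℝ) * eta ^ (m-1) - 1)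
    {ξ : ℕ → Fin m → Fin b} (hξ : ∀ k : ℕ, 1 ≤ k → TotDistinctAt b m ξ k) :
    ∃ W : ℕ → ℝ, (∀ K, W (K+1) = eta * W K) ∧
      (∀ K, W K ≤ (Ncard b m ξ (K+(m-1)) : ℝ)) ∧
      (∀ K, (Ncard b m ξ (K+(m-1)) : ℝ)/2 ≤ W K) := by
  obtain ⟨M, rfl⟩ : ∃ M, m = M+1 := ⟨m-1, by omega⟩
  simp only [Nat.add_sub_cancel] at heta ⊢
  have hbR : (3:ℝ) ≤ (b:ℝ) := by exact_mod_cast hb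
  have hη2 : (2:ℝ) ≤ eta := by linarith
  have hη0 : (0:ℝ) < eta := by linarith
  have hη0' : eta ≠ 0 := ne_of_gt hη0
  have hkey : (eta⁻¹)^M = (b:ℝ) - eta := eta_key hη0 heta
  set Nr : ℕ → ℝ := fun k => (Ncard b (M+1) ξ k : ℝ) with hNr
  have hNn : ∀ k, 0 ≤ Nr k := fun k => Nat.cast_nonneg _
  have hsum_nonneg : ∀ K : ℕ, 0 ≤ ∑ j ∈ Finset.range M, (eta⁻¹)^(j+1) * Nr (K+j) := by
    intro K
    apply Finset.sum_nonneg
    intro j _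
    apply mul_nonneg (pow_nonneg (by positivity) _) (hNn _)
  have hterm : ∀ K : ℕ, ∀ j ∈ Finset.range M,
      (eta⁻¹)^(j+1) * Nr (K+j) ≤ Nr (K+M) / 2^(M+1) := by
    intro K j hj
    have hjM : j < M := Finset.mem_range.mp hj
    have hchain : 2^(M-j) * Ncard b (M+1) ξ (K+j) ≤ Ncard b (M+1) ξ (K+M) := by
      calc 2^(M-j) * Ncard b (M+1) ξ (K+j)
          ≤ (b-1)^(M-j) * Ncard b (M+1) ξ (K+j) :=
            Nat.mul_le_mul_right _ (Nat.pow_le_pow_left (by omega) _)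
      _ ≤ Ncard b (M+1) ξ (K+j+(M-j)) := growth_pow hb hm _ _
      _ = Ncard b (M+1) ξ (K+M) := by rw [show K+j+(M-j) = K+M from by omega]
    have hchainR : (2:ℝ)^(M-j) * Nr (K+j) ≤ Nr (K+M) := by
      have := hchain
      rw [hNr]
      push_cast
      exact_mod_cast this
    have hainv : eta⁻¹ * 2 ≤ 1 := by
      have h1 : eta⁻¹ ≤ 2⁻¹ := by
        apply inv_anti₀ (by norm_num) hη2
      calc eta⁻¹ * 2 ≤ 2⁻¹ * 2 := by linarith
      _ = 1 := by norm_num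
    have ha : (eta⁻¹)^(j+1) * 2^(j+1) ≤ 1 := by
      rw [← mul_pow]
      calc (eta⁻¹ * 2)^(j+1) ≤ 1^(j+1) :=
        pow_le_pow_left₀ (by positivity) hainv _
      _ = 1 := one_pow _
    have hpow2 : (2:ℝ)^(j+1) * (2:ℝ)^(M-j) = 2^(M+1) := by
      rw [← pow_add]
      congr 1
      omega
    rw [le_div_iff₀ (by positivity : (0:ℝ) < 2^(M+1))]
    calc (eta⁻¹)^(j+1) * Nr (K+j) * 2^(M+1)
        = ((eta⁻¹)^(j+1) * 2^(j+1)) * (2^(M-j) * Nr (K+j)) := by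
          rw [← hpow2]; ring
    _ ≤ 1 * (2^(M-j) * Nr (K+j)) := by
          apply mul_le_mul_of_nonneg_right ha
          exact mul_nonneg (by positivity) (hNn _)
    _ = 2^(M-j) * Nr (K+j) := one_mul _
    _ ≤ Nr (K+M) := hchainR
  refine ⟨fun K => Nr (K+M) - ∑ j ∈ Finset.range M, (eta⁻¹)^(j+1) * Nr (K+j),
    ?_, ?_, ?_⟩
  · -- recursion
    intro K
    show Nr (K+1+M) - ∑ j ∈ Finset.range M, (eta⁻¹)^(j+1) * Nr (K+1+j)
      = eta * (Nr (K+M) - ∑ j ∈ Finset.range M, (eta⁻¹)^(j+1) * Nr (K+j))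
    have hrecN : Nr (K+M+1) = (b:ℝ) * Nr (K+M) - Nr K := by
      have h := td_rec hm hξ (k := K+M) (by omega)
      rw [show K+M+1-(M+1) = K from by omega] at h
      have h2 := congrArg (Nat.cast : ℕ → ℝ) h
      push_cast at h2
      rw [hNr]
      push_cast
      linarith
    have e1 := Finset.sum_range_succ (fun j => (eta⁻¹)^j * Nr (K+j)) M
    have e2 := Finset.sum_range_succ' (fun j => (eta⁻¹)^j * Nr (K+j)) M
    simp only [pow_zero, one_mul, Nat.add_zero] at e2
    have e3 : ∑ j ∈ Finset.range M, (eta⁻¹)^(j+1) * Nr (K+1+j)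
        = ∑ j ∈ Finset.range M, (eta⁻¹)^(j+1) * Nr (K+(j+1)) :=
      Finset.sum_congr rfl (fun j _ => by rw [show K+1+j = K+(j+1) from by omega])
    have hshift : ∑ j ∈ Finset.range M, (eta⁻¹)^(j+1) * Nr (K+1+j)
        = ∑ j ∈ Finset.range M, (eta⁻¹)^j * Nr (K+j) + (eta⁻¹)^M * Nr (K+M) - Nr K := by
      rw [e3]
      linarith [e1, e2]
    have hcoef : ∑ j ∈ Finset.range M, (eta⁻¹)^j * Nr (K+j)
        = eta * ∑ j ∈ Finset.range M, (eta⁻¹)^(j+1) * Nr (K+j) := by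
      rw [Finset.mul_sum]
      refine Finset.sum_congr rfl (fun j _ => ?_)
      have h4 : eta * ((eta⁻¹)^(j+1) * Nr (K+j)) = (eta * eta⁻¹) * ((eta⁻¹)^j * Nr (K+j)) := by
        ring
      rw [h4, mul_inv_cancel₀ hη0', one_mul]
    rw [show K+1+M = K+M+1 from by omega, hrecN, hshift, hkey, hcoef]
    ring
  · intro K
    show Nr (K+M) - ∑ j ∈ Finset.range M, (eta⁻¹)^(j+1) * Nr (K+j) ≤ Nr (K+M)
    linarith [hsum_nonneg K]
  · intro K
    show Nr (K+M) / 2 ≤ Nr (K+M) - ∑ j ∈ Finset.range M, (eta⁻¹)^(j+1) * Nr (K+j)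
    have := sum_half_bound (hNn (K+M)) _ (hterm K)
    linarith


lemma po_hW (hb : 3 ≤ b) (hm : 2 ≤ m) {lam : ℝ} (hlam1 : ((b:ℝ)-1) < lam) (hlam2 : lam < (b:ℝ))
    (hlam : lam ^ m = ((b:ℝ)-1) * ∑ i ∈ Finset.range m, lam ^ i)
    {ζ : ℕ → Fin m → Fin b} (hζ : ∀ k : ℕ, 1 ≤ k → ProgOverlapAt b m ζ k) :
    ∃ W : ℕ → ℝ, (∀ K, W (K+1) = lam * W K) ∧
      (∀ K, W K ≤ (Ncard b m ζ (K+(m-1)) : ℝ)) ∧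
      (∀ K, (Ncard b m ζ (K+(m-1)) : ℝ)/2 ≤ W K) := by
  set sq := sSeq (m := m) (by omega) ζ with hsqdef
  have hsq : ∀ i t (ht : t < m), ζ i ⟨t, ht⟩ = sq (i + t) := fun i t ht => po_s hm hζ i t ht
  obtain ⟨M, rfl⟩ : ∃ M, m = M+1 := ⟨m-1, by omega⟩
  simp only [Nat.add_sub_cancel]
  have hbR : (3:ℝ) ≤ (b:ℝ) := by exact_mod_cast hb
  have hlam2R : (2:ℝ) ≤ lam := by linarith
  have hlam0 : (0:ℝ) < lam := by linarith
  have hblam : (0:ℝ) ≤ (b:ℝ) - lam := by linarith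
  have hkey : ((b:ℝ) - lam) * ∑ i ∈ Finset.range (M+1), lam ^ i = 1 := lam_key hlam
  have halam : ((b:ℝ) - lam) * lam^M ≤ 1 := by
    have hsum_ge : lam^M ≤ ∑ i ∈ Finset.range (M+1), lam ^ i := by
      apply Finset.single_le_sum (f := fun i => lam^i)
        (fun i _ => pow_nonneg (le_of_lt hlam0) i) (Finset.self_mem_range_succ M)
    calc ((b:ℝ) - lam) * lam^M ≤ ((b:ℝ) - lam) * ∑ i ∈ Finset.range (M+1), lam ^ i :=
          mul_le_mul_of_nonneg_left hsum_ge hblam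
    _ = 1 := hkey
  set Nr : ℕ → ℝ := fun k => (Ncard b (M+1) ζ k : ℝ) with hNr
  set Qr : ℕ → ℕ → ℝ := fun k r => (Qcard ζ sq k r : ℝ) with hQr
  have hNn : ∀ k, 0 ≤ Nr k := fun k => Nat.cast_nonneg _
  have hQn : ∀ k r, 0 ≤ Qr k r := fun k r => Nat.cast_nonneg _
  have hsum_nonneg : ∀ K : ℕ, 0 ≤ ((b:ℝ) - lam) * ∑ j ∈ Finset.range M, lam^j * Qr (K+M) (j+1) := by
    intro K
    apply mul_nonneg hblam
    apply Finset.sum_nonneg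
    intro j _
    exact mul_nonneg (pow_nonneg (le_of_lt hlam0) _) (hQn _ _)
  have hterm : ∀ K : ℕ, ∀ j ∈ Finset.range M,
      ((b:ℝ) - lam) * (lam^j * Qr (K+M) (j+1)) ≤ Nr (K+M) / 2^(M+1) := by
    intro K j hj
    have hjM : j < M := Finset.mem_range.mp hj
    have hchain : 2^(j+1) * Qcard ζ sq (K+M) (j+1) ≤ Ncard b (M+1) ζ (K+M) := by
      calc 2^(j+1) * Qcard ζ sq (K+M) (j+1)
          ≤ (b-1)^(j+1) * Qcard ζ sq (K+M) (j+1) :=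
            Nat.mul_le_mul_right _ (Nat.pow_le_pow_left (by omega) _)
      _ ≤ (b-1)^(j+1) * Ncard b (M+1) ζ (K+M-(j+1)) :=
            Nat.mul_le_mul_left _ Qcard_le
      _ ≤ Ncard b (M+1) ζ (K+M-(j+1)+(j+1)) := growth_pow hb hm _ _
      _ = Ncard b (M+1) ζ (K+M) := by rw [show K+M-(j+1)+(j+1) = K+M from by omega]
    have hchainR : (2:ℝ)^(j+1) * Qr (K+M) (j+1) ≤ Nr (K+M) := by
      rw [hNr, hQr]
      push_cast
      exact_mod_cast hchain
    have ha : ((b:ℝ) - lam) * lam^j * 2^(M-j) ≤ 1 := by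
      calc ((b:ℝ) - lam) * lam^j * 2^(M-j)
          ≤ ((b:ℝ) - lam) * lam^j * lam^(M-j) := by
            apply mul_le_mul_of_nonneg_left
              (pow_le_pow_left₀ (by norm_num) (by linarith) _)
              (mul_nonneg hblam (pow_nonneg (le_of_lt hlam0) _))
      _ = ((b:ℝ) - lam) * lam^M := by
            rw [mul_assoc, ← pow_add, show j+(M-j) = M from by omega]
      _ ≤ 1 := halam
    have hpow2 : (2:ℝ)^(M-j) * (2:ℝ)^(j+1) = 2^(M+1) := by
      rw [← pow_add]
      congr 1
      omega
    rw [le_div_iff₀ (by positivity : (0:ℝ) < 2^(M+1))]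
    calc ((b:ℝ) - lam) * (lam^j * Qr (K+M) (j+1)) * 2^(M+1)
        = (((b:ℝ) - lam) * lam^j * 2^(M-j)) * (2^(j+1) * Qr (K+M) (j+1)) := by
          rw [← hpow2]; ring
    _ ≤ 1 * (2^(j+1) * Qr (K+M) (j+1)) := by
          apply mul_le_mul_of_nonneg_right ha
          exact mul_nonneg (by positivity) (hQn _ _)
    _ = 2^(j+1) * Qr (K+M) (j+1) := one_mul _
    _ ≤ Nr (K+M) := hchainR
  refine ⟨fun K => Nr (K+M) - ((b:ℝ) - lam) * ∑ j ∈ Finset.range M, lam^j * Qr (K+M) (j+1),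
    ?_, ?_, ?_⟩
  · -- recursion
    intro K
    show Nr (K+1+M) - ((b:ℝ) - lam) * ∑ j ∈ Finset.range M, lam^j * Qr (K+1+M) (j+1)
      = lam * (Nr (K+M) - ((b:ℝ) - lam) * ∑ j ∈ Finset.range M, lam^j * Qr (K+M) (j+1))
    rw [show K+1+M = K+M+1 from by omega]
    have hq0 : Qr (K+M) 0 = Nr (K+M) := by
      show ((Qcard ζ sq (K+M) 0 : ℕ) : ℝ) = ((Ncard b (M+1) ζ (K+M) : ℕ) : ℝ)
      exact_mod_cast congrArg (Nat.cast : ℕ → ℝ) Qcard_zero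
    have hsplitN : Nr (K+M+1) = (b:ℝ) * Nr (K+M) - Qr (K+M) M := by
      have h := po_split hm hsq (k := K+M) (by omega)
      simp only [Nat.add_sub_cancel] at h
      have h2 := congrArg (Nat.cast : ℕ → ℝ) h
      push_cast at h2
      rw [hNr, hQr]
      push_cast
      linarith
    have hqrec : ∀ j ∈ Finset.range M,
        lam^j * Qr (K+M+1) (j+1) = lam^j * Qr (K+M) j - lam^j * Qr (K+M) M := by
      intro j hj
      have hjM : j < M := Finset.mem_range.mp hj
      have h := po_rec hm hsq (k := K+M) (r := j) (by omega) (by omega)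
      simp only [Nat.add_sub_cancel] at h
      have h2 := congrArg (Nat.cast : ℕ → ℝ) h
      push_cast at h2
      have h3 : Qr (K+M+1) (j+1) = Qr (K+M) j - Qr (K+M) M := by
        rw [hQr]
        push_cast
        linarith
      rw [h3]
      ring
    have hLsum : ∑ j ∈ Finset.range M, lam^j * Qr (K+M+1) (j+1)
        = ∑ j ∈ Finset.range M, lam^j * Qr (K+M) j
          - (∑ j ∈ Finset.range M, lam^j) * Qr (K+M) M := by
      rw [Finset.sum_congr rfl hqrec, Finset.sum_sub_distrib, Finset.sum_mul]
    have e1 := Finset.sum_range_succ (fun j => lam^j * Qr (K+M) j) M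
    have e2 := Finset.sum_range_succ' (fun j => lam^j * Qr (K+M) j) M
    simp only [pow_zero, one_mul] at e2
    have e3 : ∑ j ∈ Finset.range M, lam^(j+1) * Qr (K+M) (j+1)
        = lam * ∑ j ∈ Finset.range M, lam^j * Qr (K+M) (j+1) := by
      rw [Finset.mul_sum]
      exact Finset.sum_congr rfl (fun j _ => by ring)
    rw [e3] at e2
    -- e1 : ∑_{range (M+1)} = ∑_{range M} + lam^M * Q M
    -- e2 : ∑_{range (M+1)} = lam * S + Q 0
    have hmid : ∑ j ∈ Finset.range M, lam^j * Qr (K+M) j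
        = Nr (K+M) + lam * (∑ j ∈ Finset.range M, lam^j * Qr (K+M) (j+1))
          - lam^M * Qr (K+M) M := by
      rw [← hq0]
      linarith [e1, e2]
    have hkey2 : ((b:ℝ) - lam) * ((∑ j ∈ Finset.range M, lam^j) + lam^M) = 1 := by
      rw [← Finset.sum_range_succ (fun i => lam^i) M]
      exact hkey
    rw [hsplitN, hLsum, hmid]
    linear_combination (Qr (K+M) M) * hkey2
  · intro K
    show Nr (K+M) - ((b:ℝ) - lam) * ∑ j ∈ Finset.range M, lam^j * Qr (K+M) (j+1) ≤ Nr (K+M)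
    linarith [hsum_nonneg K]
  · intro K
    show Nr (K+M) / 2 ≤ Nr (K+M) - ((b:ℝ) - lam) * ∑ j ∈ Finset.range M, lam^j * Qr (K+M) (j+1)
    have h1 := sum_half_bound (hNn (K+M)) _ (hterm K)
    have h2 : ((b:ℝ) - lam) * ∑ j ∈ Finset.range M, lam^j * Qr (K+M) (j+1)
        = ∑ j ∈ Finset.range M, ((b:ℝ) - lam) * (lam^j * Qr (K+M) (j+1)) := by
      rw [Finset.mul_sum]
    linarith

end Paper2
open Paper2

/-- **Proposition 3.5.** There is a constant `C₂ > 1`, depending only on `b` and `m`,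
such that `C₂⁻¹ λ^k ≤ |Σ_k^ζ| ≤ C₂ λ^k` for every progressively overlapping `ζ` and
`C₂⁻¹ η^k ≤ |Σ_k^ξ| ≤ C₂ η^k` for every totally distinct `ξ`. -/
theorem card_sigma_PO_TD_bounds (b m : ℕ) (hb : 3 ≤ b) (hm : 2 ≤ m)
    (lam : ℝ) (hlam1 : (b : ℝ) - 1 < lam) (hlam2 : lam < (b : ℝ))
    (hlam : lam ^ m = ((b : ℝ) - 1) * ∑ i ∈ Finset.range m, lam ^ i)
    (eta : ℝ) (heta1 : (b : ℝ) - 1 < eta) (heta2 : eta < (b : ℝ))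
    (heta : eta ^ m = (b : ℝ) * eta ^ (m - 1) - 1) :
    ∃ C : ℝ, 1 < C ∧
      ∀ ζ : ℕ → Fin m → Fin b, (∀ k : ℕ, 1 ≤ k → ProgOverlapAt b m ζ k) →
      ∀ ξ : ℕ → Fin m → Fin b, (∀ k : ℕ, 1 ≤ k → TotDistinctAt b m ξ k) →
      ∀ k : ℕ, 1 ≤ k →
        (C⁻¹ * lam ^ k ≤ (Nat.card ↥(SigmaSet b m ζ k) : ℝ) ∧
          (Nat.card ↥(SigmaSet b m ζ k) : ℝ) ≤ C * lam ^ k) ∧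
        (C⁻¹ * eta ^ k ≤ (Nat.card ↥(SigmaSet b m ξ k) : ℝ) ∧
          (Nat.card ↥(SigmaSet b m ξ k) : ℝ) ≤ C * eta ^ k) := by
  have hbR : (3:ℝ) ≤ (b:ℝ) := by exact_mod_cast hb
  have hC1 : (1:ℝ) < 2*(b:ℝ)^(2*m) := by
    have h1 : (1:ℝ) ≤ (b:ℝ)^(2*m) := one_le_pow₀ (by linarith)
    linarith
  refine ⟨2*(b:ℝ)^(2*m), hC1, ?_⟩
  intro ζ hζ ξ hξ k hk
  obtain ⟨Wp, hp1, hp2, hp3⟩ := Paper2.po_hW hb hm hlam1 hlam2 hlam hζ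
  obtain ⟨Wt, ht1, ht2, ht3⟩ := Paper2.td_hW hb hm heta1 heta2 heta hξ
  have Hp := Paper2.final_bounds hb hm hlam1 hlam2 Wp hp1 hp2 hp3 k hk
  have Ht := Paper2.final_bounds hb hm heta1 heta2 Wt ht1 ht2 ht3 k hk
  exact ⟨⟨Hp.1, Hp.2⟩, ⟨Ht.1, Ht.2⟩⟩

end Paper
end
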